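/- arXiv:2601.20128 — 3 statements merged into one kernel-verified Lean document; each statement's English description precedes it below -/
import Mathlib

section
/- If X : ℝ → ℝ is differentiable with 0 < X(t) < K for all t in an interval, and X satisfies dX/dt = r·X·(ln K − ln X)·(ln X − ln a(t)), then the function W(t) = 1/(ln K − ln X(t)) satisfies the linear ODE dW/dt = r·(−1 + ln(K/a(t))·W(t)) on that interval. -/
/-- If X solves the ODE and stays in (0,K) on an open interval, then
W(t) = 1/(ln K − ln X(t)) satisfies W' = r·(−1 + ln(K/a(t))·W(t)) there. -/
theorem stmt2 (r K : ℝ) (hr : 0 < r) (hK : 0 < K)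
    (a : ℝ → ℝ) (ha : Continuous a) (haK : ∀ t, 0 < a t ∧ a t < K)
    (I : Set ℝ) (hI : IsOpen I) (hI' : I.OrdConnected)
    (X : ℝ → ℝ) (hX : ∀ t ∈ I, 0 < X t ∧ X t < K)
    (hXd : ∀ t ∈ I, HasDerivAt X
      (r * X t * (Real.log K - Real.log (X t)) * (Real.log (X t) - Real.log (a t))) t) :
    ∀ t ∈ I, HasDerivAt (fun s => 1 / (Real.log K - Real.log (X s)))
      (r * (-1 + Real.log (K / a t) * (1 / (Real.log K - Real.log (X t))))) t := by
  intro t ht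
  obtain ⟨hx0, hxK⟩ := hX t ht
  have hL : Real.log (X t) < Real.log K := Real.log_lt_log hx0 hxK
  have hL0 : Real.log K - Real.log (X t) ≠ 0 := ne_of_gt (sub_pos.mpr hL)
  have h1 : HasDerivAt (fun s => Real.log K - Real.log (X s))
      (0 - r * X t * (Real.log K - Real.log (X t)) * (Real.log (X t) - Real.log (a t)) / X t)
      t := (hasDerivAt_const t _).sub ((hXd t ht).log hx0.ne')
  have h2 := h1.inv hL0
  have hlog : Real.log (K / a t) = Real.log K - Real.log (a t) :=
    Real.log_div hK.ne' (haK t).1.ne'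
  simp only [one_div]
  convert h2 using 1
  · rfl
  · rfl
  · rfl
  rw [hlog]
  field_simp
  ring
end

section
/- For X₀ ∈ (0, K) and constant Allee parameter a with 0 < a < K, the function X(t) = K·exp(−e^{−r·ln(K/a)·t}·{(ln K − ln X₀)^{-1} − (ln K − ln a)^{-1}·(1 − e^{−r·(ln K − ln a)·t})}^{-1}) satisfies X(0) = X₀ and solves the ODE X'(t) = r·X(t)·(ln K − ln X(t))·(ln X(t) − ln a) on the interval [0, τ) where the denominator expression (ln K − ln X₀)^{-1} − (ln K − ln a)^{-1}·(1 − e^{−r·(ln K − ln a)·t}) remains positive. -/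
/-- For constant Allee parameter a, the explicit function
X(t) = K·exp(−e^{−r(ln K − ln a)t}/D(t)) with
D(t) = (ln K − ln X₀)⁻¹ − (ln K − ln a)⁻¹·(1 − e^{−r(ln K − ln a)t})
satisfies X(0) = X₀ and solves the ODE wherever D stays positive (t ≥ 0). -/
theorem stmt6 (r a K X₀ : ℝ) (hr : 0 < r) (ha : 0 < a) (haK : a < K)
    (hX₀ : X₀ ∈ Set.Ioo 0 K)
    (D X : ℝ → ℝ)
    (hD : ∀ t, D t = (Real.log K - Real.log X₀)⁻¹ -
      (Real.log K - Real.log a)⁻¹ * (1 - Real.exp (-(r * (Real.log K - Real.log a)) * t)))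
    (hX : ∀ t, X t = K * Real.exp (-(Real.exp (-(r * (Real.log K - Real.log a)) * t) / D t))) :
    X 0 = X₀ ∧
    ∀ t, 0 ≤ t → 0 < D t →
      HasDerivAt X (r * X t * (Real.log K - Real.log (X t)) * (Real.log (X t) - Real.log a)) t := by
  obtain ⟨hX0, hXK⟩ := hX₀
  have hK : 0 < K := ha.trans haK
  have hb : 0 < Real.log K - Real.log a := sub_pos.2 (Real.log_lt_log ha haK)
  have hc : 0 < Real.log K - Real.log X₀ := sub_pos.2 (Real.log_lt_log hX0 hXK)
  set b := Real.log K - Real.log a with hbdef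
  set c := Real.log K - Real.log X₀ with hcdef
  have hDfun : D = fun s => c⁻¹ - b⁻¹ * (1 - Real.exp (-(r*b)*s)) := funext hD
  have hXfun : X = fun s => K * Real.exp (-(Real.exp (-(r*b)*s) / D s)) := funext hX
  constructor
  · have hD0 : D 0 = c⁻¹ := by rw [hD]; simp
    rw [hX 0, hD0]
    have : -(Real.exp (-(r*b)*0) / c⁻¹) = Real.log X₀ - Real.log K := by
      simp [hcdef]
    rw [this, Real.exp_sub, Real.exp_log hX0, Real.exp_log hK]
    field_simp
  · intro t ht hDt
    have hE : HasDerivAt (fun s => Real.exp (-(r*b)*s)) (Real.exp (-(r*b)*t) * -(r*b)) t := by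
      simpa using ((hasDerivAt_id t).const_mul (-(r*b))).exp
    have hDd : HasDerivAt D (0 - b⁻¹ * (0 - Real.exp (-(r*b)*t) * -(r*b))) t := by
      rw [hDfun]
      exact (hasDerivAt_const t c⁻¹).sub
        (((hasDerivAt_const t (1:ℝ)).sub hE).const_mul b⁻¹)
    have hu := hE.div hDd hDt.ne'
    have key : HasDerivAt (fun s => K * Real.exp (-(Real.exp (-(r*b)*s) / D s)))
        (r * (K * Real.exp (-(Real.exp (-(r*b)*t) / D t))) *
          (Real.exp (-(r*b)*t) / D t) * (b - Real.exp (-(r*b)*t) / D t)) t := by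
      have h2 := (hu.neg.exp.const_mul K)
      refine h2.congr_deriv ?_
      symm
      simp only [Pi.neg_apply, Pi.div_apply]
      field_simp
      ring
    have hlog : Real.log (X t) = Real.log K - Real.exp (-(r*b)*t) / D t := by
      rw [hX t, Real.log_mul hK.ne' (Real.exp_ne_zero _), Real.log_exp]
      ring
    have goalval : r * X t * (Real.log K - Real.log (X t)) * (Real.log (X t) - Real.log a)
        = r * (K * Real.exp (-(Real.exp (-(r*b)*t) / D t))) *
          (Real.exp (-(r*b)*t) / D t) * (b - Real.exp (-(r*b)*t) / D t) := by
      rw [hlog, hX t, hbdef]; ring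
    rw [goalval, hXfun]
    exact key
end

section
/- For constant a with a < X₀ < K, the explicit solution X(t) = K·exp(−e^{−r(ln K − ln a)t}·{(ln K − ln X₀)^{-1} − (ln K − ln a)^{-1}(1 − e^{−r(ln K − ln a)t})}^{-1}) converges to K as t → +∞. -/
open Filter

/-- For 0 < a < X₀ < K, the explicit solution converges to K as t → ∞. -/
theorem stmt13 (r a K X₀ : ℝ) (hr : 0 < r) (ha : 0 < a) (haX₀ : a < X₀) (hX₀K : X₀ < K)
    (X : ℝ → ℝ)
    (hX : ∀ t, X t = K * Real.exp (-(Real.exp (-(r * (Real.log K - Real.log a)) * t) /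
      ((Real.log K - Real.log X₀)⁻¹ -
        (Real.log K - Real.log a)⁻¹ * (1 - Real.exp (-(r * (Real.log K - Real.log a)) * t)))))) :
    Tendsto X atTop (nhds K) := by
  have hX₀ : 0 < X₀ := ha.trans haX₀
  have hK : 0 < K := hX₀.trans hX₀K
  have hla : Real.log a < Real.log K := Real.log_lt_log ha (haX₀.trans hX₀K)
  have hlX : Real.log X₀ < Real.log K := Real.log_lt_log hX₀ hX₀K
  have hlaX : Real.log a < Real.log X₀ := Real.log_lt_log ha haX₀
  have hc : 0 < r * (Real.log K - Real.log a) := by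
    apply mul_pos hr; linarith
  -- e^{-ct} → 0
  have hE : Tendsto (fun t => Real.exp (-(r * (Real.log K - Real.log a)) * t)) atTop (nhds 0) := by
    have h1 : Tendsto (fun t : ℝ => r * (Real.log K - Real.log a) * t) atTop atTop :=
      (tendsto_id (α := ℝ)).const_mul_atTop hc
    have : Tendsto (fun t => -(r * (Real.log K - Real.log a)) * t) atTop atBot := by
      exact (tendsto_neg_atTop_atBot.comp h1).congr (fun t => by simp [Function.comp, neg_mul])
    exact Real.tendsto_exp_atBot.comp this
  set L := (Real.log K - Real.log X₀)⁻¹ - (Real.log K - Real.log a)⁻¹ with hL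
  have hLpos : 0 < L := by
    rw [hL, sub_pos]
    exact inv_strictAnti₀ (by linarith) (by linarith)
  have hden : Tendsto (fun t => (Real.log K - Real.log X₀)⁻¹ -
      (Real.log K - Real.log a)⁻¹ * (1 - Real.exp (-(r * (Real.log K - Real.log a)) * t)))
      atTop (nhds L) := by
    have : Tendsto (fun t => (Real.log K - Real.log X₀)⁻¹ -
        (Real.log K - Real.log a)⁻¹ * (1 - Real.exp (-(r * (Real.log K - Real.log a)) * t)))
        atTop (nhds ((Real.log K - Real.log X₀)⁻¹ - (Real.log K - Real.log a)⁻¹ * (1 - 0))) :=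
      tendsto_const_nhds.sub (tendsto_const_nhds.mul (tendsto_const_nhds.sub hE))
    simpa using this
  have hfrac : Tendsto (fun t => Real.exp (-(r * (Real.log K - Real.log a)) * t) /
      ((Real.log K - Real.log X₀)⁻¹ -
        (Real.log K - Real.log a)⁻¹ * (1 - Real.exp (-(r * (Real.log K - Real.log a)) * t))))
      atTop (nhds 0) := by
    have := hE.div hden hLpos.ne'
    rw [zero_div] at this; exact this
  have : Tendsto X atTop (nhds (K * Real.exp (-0))) := by
    apply Tendsto.congr (fun t => (hX t).symm)
    exact tendsto_const_nhds.mul (Real.continuous_exp.continuousAt.tendsto.comp hfrac.neg)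
  simpa using this
end
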